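/- Corollary (choosing η for a desired sparsity level): let ρ ∈ [0, 1) with ρ·k ≥ 3, and let η > 0 satisfy ⌊η/δ⌋ ≤ (k·ρ − 3)/2. Then for every z ∈ [l, u], the number of nonzero entries of the fuzzy tiling activation satisfies ‖φ_η(z)‖_0 ≤ k·ρ. -/

import Mathlib

/-- Indicator of positivity: `Iplus x = 1` if `x > 0`, else `0`. -/
noncomputable def Iplus (x : ℝ) : ℝ := if 0 < x then 1 else 0

/-- Tiling vector entries: `tvec l δ i = l + (i - 1) * δ` (1-based index). -/
noncomputable def tvec (l δ : ℝ) (i : ℕ) : ℝ := l + ((i : ℝ) - 1) * δ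

/-- Tiling activation, componentwise. -/
noncomputable def phi (l δ z : ℝ) (i : ℕ) : ℝ :=
  1 - Iplus (max (tvec l δ i - z) 0 + max (z - δ - tvec l δ i) 0)

/-- Fuzzy indicator. -/
noncomputable def Ietaplus (η x : ℝ) : ℝ := Iplus (η - x) * x + Iplus (x - η)

/-- Fuzzy tiling activation, componentwise. -/
noncomputable def phiEta (l δ η z : ℝ) (i : ℕ) : ℝ :=
  1 - Ietaplus η (max (tvec l δ i - z) 0 + max (z - δ - tvec l δ i) 0)

/- Number of nonzero entries among indices 1,…,k. -/
open scoped Classical in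
noncomputable def norm0 (k : ℕ) (v : ℕ → ℝ) : ℕ :=
  ((Finset.Icc 1 k).filter fun j => v j ≠ 0).card

theorem stmt14 (l u δ : ℝ) (k : ℕ) (hk : 0 < k) (hlu : l < u) (hδ : 0 < δ)
    (hkδ : (k : ℝ) * δ = u - l) (ρ : ℝ) (hρ0 : 0 ≤ ρ) (hρ1 : ρ < 1)
    (hρk : 3 ≤ ρ * (k : ℝ)) (η : ℝ) (hη : 0 < η)
    (hfloor : (⌊η / δ⌋ : ℝ) ≤ ((k : ℝ) * ρ - 3) / 2)
    (z : ℝ) (hz : z ∈ Set.Icc l u) :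
    (norm0 k (phiEta l δ η z) : ℝ) ≤ (k : ℝ) * ρ := by
  classical
  have hδ' : δ ≠ 0 := ne_of_gt hδ
  set A : ℝ := 1 + (z - δ - η - l) / δ with hA
  set B : ℝ := 1 + (z + η - l) / δ with hB
  have key : ∀ i ∈ (Finset.Icc 1 k).filter (fun j => phiEta l δ η z j ≠ 0),
      A ≤ (i : ℝ) ∧ (i : ℝ) ≤ B := by
    intro i hi
    simp only [Finset.mem_filter, Finset.mem_Icc] at hi
    obtain ⟨⟨h1, hik⟩, hne⟩ := hi
    set d : ℝ := max (tvec l δ i - z) 0 + max (z - δ - tvec l δ i) 0 with hd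
    have hdη : d ≤ η := by
      by_contra h
      push_neg at h
      apply hne
      unfold phiEta Ietaplus Iplus
      rw [← hd, if_neg (by linarith), if_pos (by linarith)]
      ring
    have hm1 : (0:ℝ) ≤ max (tvec l δ i - z) 0 := le_max_right _ _
    have hm2 : (0:ℝ) ≤ max (z - δ - tvec l δ i) 0 := le_max_right _ _
    have hx1 : tvec l δ i - z ≤ max (tvec l δ i - z) 0 := le_max_left _ _
    have hx2 : z - δ - tvec l δ i ≤ max (z - δ - tvec l δ i) 0 := le_max_left _ _
    rw [hd] at hdη
    have h1' : tvec l δ i - z ≤ η := by linarith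
    have h2' : z - δ - tvec l δ i ≤ η := by linarith
    unfold tvec at h1' h2'
    constructor
    · rw [hA]
      have : (z - δ - η - l) / δ ≤ (i : ℝ) - 1 := by
        rw [div_le_iff₀ hδ]; nlinarith
      linarith
    · rw [hB]
      have : (i : ℝ) - 1 ≤ (z + η - l) / δ := by
        rw [le_div_iff₀ hδ]; nlinarith
      linarith
  set m : ℤ := ⌈A⌉ with hm
  set M : ℤ := ⌊B⌋ with hM
  have hcard : norm0 k (phiEta l δ η z) ≤ (Finset.Icc m M).card := by
    unfold norm0
    refine Finset.card_le_card_of_injOn (fun i : ℕ => (i : ℤ)) ?_ ?_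
    · intro i hi
      obtain ⟨hAi, hiB⟩ := key i (by simpa using hi)
      simp only [Finset.mem_coe, Finset.mem_Icc]
      constructor
      · rw [hm, Int.ceil_le]; exact_mod_cast hAi
      · rw [hM, Int.le_floor]; exact_mod_cast hiB
    · intro a _ b _ h
      simpa using h
  have hIcc : (Finset.Icc m M).card = (M + 1 - m).toNat := Int.card_Icc m M
  by_cases hpos : 0 ≤ M + 1 - m
  · -- main arithmetic
    have hMm : M - m ≤ ⌊B - A⌋ := by
      rw [Int.le_floor]
      push_cast
      have h1 : (M : ℝ) ≤ B := Int.floor_le B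
      have h2 : A ≤ (m : ℝ) := Int.le_ceil A
      linarith
    have hBA : B - A = 2 * (η / δ) + 1 := by
      rw [hA, hB]; field_simp; ring
    have hfl : ⌊B - A⌋ ≤ 2 * ⌊η / δ⌋ + 2 := by
      rw [hBA]
      have h2x : ⌊2 * (η / δ)⌋ ≤ 2 * ⌊η / δ⌋ + 1 := by
        have h := Int.lt_floor_add_one (η / δ)
        have h2 : 2 * (η / δ) < ((2 * ⌊η / δ⌋ + 2 : ℤ) : ℝ) := by
          push_cast; linarith
        have := Int.floor_lt.mpr h2
        omega
      have : (2 * (η / δ) + 1 : ℝ) = 2 * (η / δ) + (1 : ℤ) := by push_cast; ring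
      rw [this, Int.floor_add_intCast]
      omega
    have hfinal : ((M + 1 - m : ℤ) : ℝ) ≤ (k : ℝ) * ρ := by
      have : ((M - m : ℤ) : ℝ) ≤ 2 * (⌊η / δ⌋ : ℝ) + 2 := by
        exact_mod_cast le_trans hMm hfl
      push_cast at this ⊢
      linarith
    calc (norm0 k (phiEta l δ η z) : ℝ) ≤ ((Finset.Icc m M).card : ℝ) := by
            exact_mod_cast hcard
      _ = ((M + 1 - m : ℤ) : ℝ) := by
            rw [hIcc]; exact_mod_cast Int.toNat_of_nonneg hpos
      _ ≤ (k : ℝ) * ρ := hfinal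
  · push_neg at hpos
    have : (M + 1 - m).toNat = 0 := Int.toNat_of_nonpos (le_of_lt hpos)
    have h0 : norm0 k (phiEta l δ η z) = 0 := by omega
    rw [h0]
    push_cast
    nlinarith
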